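/- For every ε ∈ (0, 1/2) and every T ≥ 1 there exists a number of contexts C and an instance of the contextual bandits problem with cross-learning with K = 2 actions such that every randomized learning algorithm A satisfies E[Reg_Post(A)] ≥ (1/2 − ε)·T. The instance: contexts c_1, …, c_T are drawn i.i.d. uniformly from [C], and independently, for each pair (t, c), with probability 1/2 the rewards are (r_{1,t}(c), r_{2,t}(c)) = (1, 0) and with probability 1/2 they are (0, 1). Here Reg_Post(A) = Σ_{t=1}^T r_{π_Post(c_t),t}(c_t) − Σ_{t=1}^T r_{I_t,t}(c_t), where π_Post(c) = argmax_{i} Σ_{t=1}^T r_{i,t}(c)·1{c_t = c} is the best stationary policy in hindsight. -/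

import Mathlib

open MeasureTheory ProbabilityTheory
open scoped Classical

/-- Rewards of the hard ex-post instance with `K = 2` arms: if the coin is `true` then
arm `0` has reward `1` and arm `1` reward `0`, and vice versa otherwise. -/
noncomputable def rfEP (i : Fin 2) (bcoin : Bool) : ℝ :=
  if i = 0 then (if bcoin then 1 else 0) else (if bcoin then 0 else 1)

lemma rfEP_zero_add_one (b : Bool) : rfEP 0 b + rfEP 1 b = 1 := by
  cases b <;> simp [rfEP]

lemma rfEP_nonneg (j : Fin 2) (b : Bool) : 0 ≤ rfEP j b := by
  unfold rfEP; split <;> cases b <;> norm_num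

lemma rfEP_le_one (j : Fin 2) (b : Bool) : rfEP j b ≤ 1 := by
  unfold rfEP; split <;> cases b <;> norm_num

lemma rfEP_not (j : Fin 2) (b : Bool) : rfEP j (!b) = 1 - rfEP j b := by
  unfold rfEP; split <;> cases b <;> norm_num

lemma rfEP_max (b : Bool) : max (rfEP 0 b) (rfEP 1 b) = 1 := by
  cases b <;> simp [rfEP]

lemma unifC_isProb {C : ℕ} (hC : 1 ≤ C) :
    IsProbabilityMeasure ((C : ENNReal)⁻¹ • Measure.count : Measure (Fin C)) := by
  have hC0 : (C : ENNReal) ≠ 0 := by exact_mod_cast (Nat.pos_of_ne_zero (by omega)).ne'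
  constructor
  rw [Measure.smul_apply, Measure.count_univ, smul_eq_mul, ENat.card_eq_coe_fintype_card,
    ENat.toENNReal_coe, Fintype.card_fin,
    ENNReal.inv_mul_cancel hC0 (by simp)]

lemma unifB_isProb : IsProbabilityMeasure ((2 : ENNReal)⁻¹ • Measure.count : Measure Bool) := by
  constructor
  rw [Measure.smul_apply, Measure.count_univ, smul_eq_mul, ENat.card_eq_coe_fintype_card,
    ENat.toENNReal_coe, Fintype.card_bool]
  rw [show ((2 : ℕ) : ENNReal) = 2 by norm_cast]
  rw [ENNReal.inv_mul_cancel (by norm_num) (by norm_num)]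

noncomputable def μEP (T C : ℕ) :
    Measure ((Fin T → Fin C) × (Fin T → Fin C → Bool)) :=
  (Measure.pi fun _ : Fin T => ((C : ENNReal)⁻¹ • Measure.count : Measure (Fin C))).prod
    (Measure.pi fun _ : Fin T =>
      Measure.pi fun _ : Fin C => ((2 : ENNReal)⁻¹ • Measure.count : Measure Bool))

lemma μEP_isProb {T C : ℕ} (hC : 1 ≤ C) : IsProbabilityMeasure (μEP T C) := by
  haveI := unifC_isProb (C := C) hC
  haveI := unifB_isProb
  haveI : IsProbabilityMeasure
      (Measure.pi fun _ : Fin C => ((2 : ENNReal)⁻¹ • Measure.count : Measure Bool)) :=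
    Measure.pi.instIsProbabilityMeasure _
  haveI : IsProbabilityMeasure
      (Measure.pi fun _ : Fin T => ((C : ENNReal)⁻¹ • Measure.count : Measure (Fin C))) :=
    Measure.pi.instIsProbabilityMeasure _
  haveI : IsProbabilityMeasure (Measure.pi fun _ : Fin T =>
      Measure.pi fun _ : Fin C => ((2 : ENNReal)⁻¹ • Measure.count : Measure Bool)) :=
    Measure.pi.instIsProbabilityMeasure _
  rw [μEP]
  infer_instance

lemma μEP_singleton {T C : ℕ} (hC : 1 ≤ C)
    (x : (Fin T → Fin C) × (Fin T → Fin C → Bool)) :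
    μEP T C {x} = ((C : ENNReal)⁻¹) ^ T * ((2 : ENNReal)⁻¹) ^ (T * C) := by
  haveI := unifC_isProb (C := C) hC
  haveI := unifB_isProb
  haveI : IsProbabilityMeasure
      (Measure.pi fun _ : Fin C => ((2 : ENNReal)⁻¹ • Measure.count : Measure Bool)) :=
    Measure.pi.instIsProbabilityMeasure _
  haveI : IsProbabilityMeasure (Measure.pi fun _ : Fin T =>
      Measure.pi fun _ : Fin C => ((2 : ENNReal)⁻¹ • Measure.count : Measure Bool)) :=
    Measure.pi.instIsProbabilityMeasure _
  obtain ⟨f, g⟩ := x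
  rw [μEP, ← Set.singleton_prod_singleton, Measure.prod_prod,
    ← Set.univ_pi_singleton f, Measure.pi_pi, ← Set.univ_pi_singleton g, Measure.pi_pi]
  have h1 : ∀ t : Fin T, ((C : ENNReal)⁻¹ • Measure.count : Measure (Fin C)) {f t}
      = (C : ENNReal)⁻¹ := by
    intro t; simp [Measure.count_singleton]
  have h2 : ∀ t : Fin T,
      (Measure.pi fun _ : Fin C => ((2 : ENNReal)⁻¹ • Measure.count : Measure Bool)) {g t}
        = ((2 : ENNReal)⁻¹) ^ C := by
    intro t
    rw [← Set.univ_pi_singleton (g t), Measure.pi_pi]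
    simp [Measure.count_singleton]
  simp only [h1, h2]
  simp [Finset.prod_const, ← pow_mul, mul_comm C T]

abbrev XEP (T C : ℕ) := (Fin T → Fin C) × (Fin T → Fin C → Bool)

noncomputable def wEP (T C : ℕ) : ℝ :=
  (((C : ENNReal)⁻¹) ^ T * ((2 : ENNReal)⁻¹) ^ (T * C)).toReal

lemma integral_μEP {T C : ℕ} (hC : 1 ≤ C) (f : XEP T C → ℝ) :
    ∫ x, f x ∂μEP T C = wEP T C * ∑ x : XEP T C, f x := by
  haveI := μEP_isProb (T := T) hC
  rw [integral_fintype (Integrable.of_finite), Finset.mul_sum]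
  refine Finset.sum_congr rfl fun x _ => ?_
  rw [Measure.real, μEP_singleton hC, smul_eq_mul, wEP]

lemma wEP_card {T C : ℕ} (hC : 1 ≤ C) :
    wEP T C * (Fintype.card (XEP T C) : ℝ) = 1 := by
  haveI := μEP_isProb (T := T) hC
  have h := integral_μEP (T := T) hC (fun _ => (1 : ℝ))
  rw [integral_const] at h
  simp only [measure_univ, probReal_univ, ENNReal.toReal_one, one_smul, Finset.sum_const,
    Finset.card_univ, nsmul_eq_mul, mul_one] at h
  linarith [h]

lemma integral_invol {T C : ℕ} (hC : 1 ≤ C) (e : XEP T C → XEP T C)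
    (he : Function.Involutive e) (F : XEP T C → ℝ)
    (h : ∀ x, F x + F (e x) = 1) :
    ∫ x, F x ∂μEP T C = 1 / 2 := by
  have hsum : ∑ x : XEP T C, F (e x) = ∑ x : XEP T C, F x :=
    Equiv.sum_comp (Function.Involutive.toPerm e he) F
  have h2 : 2 * ∑ x : XEP T C, F x = (Fintype.card (XEP T C) : ℝ) := by
    have : (∑ x : XEP T C, F x) + (∑ x : XEP T C, F (e x))
        = ∑ x : XEP T C, (1 : ℝ) := by
      rw [← Finset.sum_add_distrib]
      exact Finset.sum_congr rfl fun x _ => h x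
    simp only [Finset.sum_const, Finset.card_univ, nsmul_eq_mul, mul_one] at this
    linarith [this, hsum]
  rw [integral_μEP hC]
  have hw := wEP_card (T := T) (C := C) hC
  linear_combination (wEP T C / 2) * h2 + (1 / 2) * hw

lemma integral_ind {T C : ℕ} (hC : 1 ≤ C) {t u : Fin T} (h : u ≠ t) :
    ∫ x, (if x.1 u = x.1 t then (1 : ℝ) else 0) ∂μEP T C = 1 / C := by
  classical
  set ψ : XEP T C × Fin C → XEP T C × Fin C :=
    fun p => ((Function.update p.1.1 u p.2, p.1.2), p.1.1 u) with hψ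
  have hinv : Function.Involutive ψ := by
    rintro ⟨⟨f, g⟩, c⟩
    simp only [hψ]
    rw [Function.update_self, Function.update_idem, Function.update_eq_self]
  have key : (C : ℝ) * ∑ x : XEP T C, (if x.1 u = x.1 t then (1 : ℝ) else 0)
      = (Fintype.card (XEP T C) : ℝ) := by
    have h1 : ∑ p : XEP T C × Fin C, (if p.1.1 u = p.1.1 t then (1 : ℝ) else 0)
        = (C : ℝ) * ∑ x : XEP T C, (if x.1 u = x.1 t then (1 : ℝ) else 0) := by
      rw [Fintype.sum_prod_type]
      have hconst : ∀ x : XEP T C,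
          ∑ _c : Fin C, (if x.1 u = x.1 t then (1 : ℝ) else 0)
            = (C : ℝ) * (if x.1 u = x.1 t then (1 : ℝ) else 0) := by
        intro x
        rw [Finset.sum_const, Finset.card_univ, Fintype.card_fin, nsmul_eq_mul]
      rw [Finset.sum_congr rfl fun x _ => hconst x, ← Finset.mul_sum]
    have h2 : ∑ p : XEP T C × Fin C,
        (fun p : XEP T C × Fin C => if p.1.1 u = p.1.1 t then (1 : ℝ) else 0) (ψ p)
        = ∑ x : XEP T C, (1 : ℝ) := by
      rw [Fintype.sum_prod_type]
      refine Finset.sum_congr rfl fun x _ => ?_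
      have : ∀ c : Fin C,
          ((if (Function.update x.1 u c) u = (Function.update x.1 u c) t then (1:ℝ) else 0))
          = (if c = x.1 t then (1:ℝ) else 0) := by
        intro c
        rw [Function.update_self, Function.update_of_ne (Ne.symm h)]
      simp only [hψ, this]
      simp
    have h3 : ∑ p : XEP T C × Fin C,
        (fun p : XEP T C × Fin C => if p.1.1 u = p.1.1 t then (1 : ℝ) else 0) (ψ p)
        = ∑ p : XEP T C × Fin C, (if p.1.1 u = p.1.1 t then (1 : ℝ) else 0) :=
      Equiv.sum_comp (Function.Involutive.toPerm ψ hinv)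
        (fun p : XEP T C × Fin C => if p.1.1 u = p.1.1 t then (1 : ℝ) else 0)
    rw [h3, h1] at h2
    simpa using h2
  rw [integral_μEP hC]
  have hw := wEP_card (T := T) (C := C) hC
  have hC0 : (0 : ℝ) < C := by exact_mod_cast hC
  rw [eq_div_iff (ne_of_gt hC0)]
  linear_combination (wEP T C) * key + hw

noncomputable def SEP {T C : ℕ} (x : XEP T C) (c : Fin C) (j : Fin 2) : ℝ :=
  ∑ t : Fin T, if x.1 t = c then rfEP j (x.2 t c) else 0

noncomputable def BEP {T C : ℕ} (x : XEP T C) : ℝ :=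
  ∑ c : Fin C, max (SEP x c 0) (SEP x c 1)

noncomputable def nEP {T C : ℕ} (x : XEP T C) (c : Fin C) : ℝ :=
  ∑ t : Fin T, if x.1 t = c then (1 : ℝ) else 0

noncomputable def PEP {T C : ℕ} (x : XEP T C) : ℝ :=
  ∑ t : Fin T, ∑ u : Fin T, if u ≠ t ∧ x.1 u = x.1 t then (1 : ℝ) else 0

lemma SEP_add {T C : ℕ} (x : XEP T C) (c : Fin C) :
    SEP x c 0 + SEP x c 1 = nEP x c := by
  rw [SEP, SEP, nEP, ← Finset.sum_add_distrib]
  refine Finset.sum_congr rfl fun t _ => ?_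
  by_cases h : x.1 t = c
  · simp only [h, if_true]; exact rfEP_zero_add_one _
  · simp [h]

lemma sum_nEP {T C : ℕ} (x : XEP T C) : ∑ c : Fin C, nEP x c = T := by
  simp only [nEP]
  rw [Finset.sum_comm]
  simp [Finset.sum_ite_eq]

lemma qEP_eq {T C : ℕ} (x : XEP T C) (c : Fin C) :
    (∑ t : Fin T, ∑ u : Fin T, if u ≠ t ∧ x.1 t = c ∧ x.1 u = c then (1 : ℝ) else 0)
      = nEP x c ^ 2 - nEP x c := by
  have hsq : nEP x c ^ 2
      = ∑ t : Fin T, ∑ u : Fin T, if x.1 t = c ∧ x.1 u = c then (1 : ℝ) else 0 := by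
    rw [pow_two, nEP, Finset.sum_mul_sum]
    refine Finset.sum_congr rfl fun t _ => Finset.sum_congr rfl fun u _ => ?_
    by_cases h1 : x.1 t = c <;> by_cases h2 : x.1 u = c <;> simp [h1, h2]
  have hdiag : ∀ t : Fin T,
      ∑ u : Fin T, ((if x.1 t = c ∧ x.1 u = c then (1 : ℝ) else 0)
        - (if u ≠ t ∧ x.1 t = c ∧ x.1 u = c then (1 : ℝ) else 0))
      = (if x.1 t = c then (1 : ℝ) else 0) := by
    intro t
    have hterm : ∀ u : Fin T,
        ((if x.1 t = c ∧ x.1 u = c then (1 : ℝ) else 0)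
          - (if u ≠ t ∧ x.1 t = c ∧ x.1 u = c then (1 : ℝ) else 0))
        = (if u = t then (if x.1 t = c then (1 : ℝ) else 0) else 0) := by
      intro u
      by_cases hu : u = t
      · subst hu
        by_cases hc : x.1 u = c <;> simp [hc]
      · by_cases hc : x.1 t = c ∧ x.1 u = c <;> simp [hu, hc]
    rw [Finset.sum_congr rfl fun u _ => hterm u]
    simp [Finset.sum_ite_eq']
  have h2 : (∑ t : Fin T, ∑ u : Fin T, if x.1 t = c ∧ x.1 u = c then (1 : ℝ) else 0)
      - (∑ t : Fin T, ∑ u : Fin T, if u ≠ t ∧ x.1 t = c ∧ x.1 u = c then (1 : ℝ) else 0)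
      = nEP x c := by
    rw [← Finset.sum_sub_distrib, nEP]
    refine Finset.sum_congr rfl fun t _ => ?_
    rw [← Finset.sum_sub_distrib]
    exact hdiag t
  linarith [hsq, h2]

lemma sum_qEP {T C : ℕ} (x : XEP T C) :
    ∑ c : Fin C, (nEP x c ^ 2 - nEP x c) = PEP x := by
  rw [← Finset.sum_congr rfl fun c (_ : c ∈ Finset.univ) => qEP_eq x c, PEP]
  rw [Finset.sum_comm]
  refine Finset.sum_congr rfl fun t _ => ?_
  rw [Finset.sum_comm]
  refine Finset.sum_congr rfl fun u _ => ?_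
  have hterm : ∀ c : Fin C,
      (if u ≠ t ∧ x.1 t = c ∧ x.1 u = c then (1 : ℝ) else 0)
      = (if x.1 t = c then (if u ≠ t ∧ x.1 u = x.1 t then (1 : ℝ) else 0) else 0) := by
    intro c
    by_cases h1 : x.1 t = c
    · subst h1
      by_cases h2 : u ≠ t ∧ x.1 u = x.1 t
      · simp [h2]
      · simp only [if_neg h2, eq_self_iff_true, if_true]
        rw [if_neg]
        tauto
    · rw [if_neg h1, if_neg (by tauto)]
  rw [Finset.sum_congr rfl fun c _ => hterm c]
  simp [Finset.sum_ite_eq]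

lemma max_SEP_ge {T C : ℕ} (x : XEP T C) (c : Fin C) :
    nEP x c - (nEP x c ^ 2 - nEP x c) / 2 ≤ max (SEP x c 0) (SEP x c 1) := by
  classical
  set N : ℕ := (Finset.univ.filter fun t : Fin T => x.1 t = c).card with hN
  have hn : nEP x c = (N : ℝ) := by
    rw [nEP, hN]
    rw [Finset.sum_boole]
  by_cases hN0 : N = 0
  · have hempty : (Finset.univ.filter fun t : Fin T => x.1 t = c) = ∅ :=
      Finset.card_eq_zero.mp (hN ▸ hN0)
    have hno : ∀ t : Fin T, ¬ (x.1 t = c) := by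
      intro t ht
      have : t ∈ (Finset.univ.filter fun t : Fin T => x.1 t = c) := by
        simp [ht]
      simp [hempty] at this
    have hS : ∀ j : Fin 2, SEP x c j = 0 := by
      intro j; rw [SEP]; exact Finset.sum_eq_zero fun t _ => by simp [hno t]
    rw [hS 0, hS 1, hn, hN0]
    norm_num
  by_cases hN1 : N = 1
  · obtain ⟨t₀, ht₀⟩ := Finset.card_eq_one.mp (hN ▸ hN1)
    have hiff : ∀ t : Fin T, x.1 t = c ↔ t = t₀ := by
      intro t
      constructor
      · intro h
        have : t ∈ (Finset.univ.filter fun t : Fin T => x.1 t = c) := by simp [h]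
        rw [ht₀] at this; simpa using this
      · intro h
        rw [h]
        have : t₀ ∈ ({t₀} : Finset (Fin T)) := Finset.mem_singleton_self t₀
        rw [← ht₀] at this; simpa using this
    have hS : ∀ j : Fin 2, SEP x c j = rfEP j (x.2 t₀ c) := by
      intro j
      rw [SEP]
      have : ∀ t : Fin T, (if x.1 t = c then rfEP j (x.2 t c) else 0)
          = (if t = t₀ then rfEP j (x.2 t c) else 0) := by
        intro t; by_cases h : x.1 t = c
        · rw [if_pos h, if_pos ((hiff t).mp h)]
        · rw [if_neg h, if_neg (fun ht => h ((hiff t).mpr ht))]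
      rw [Finset.sum_congr rfl fun t _ => this t]
      simp [Finset.sum_ite_eq']
    rw [hS 0, hS 1, rfEP_max, hn, hN1]
    norm_num
  · have hN2 : 2 ≤ N := by omega
    have hN2' : (2 : ℝ) ≤ (N : ℝ) := by exact_mod_cast hN2
    have hhalf : nEP x c / 2 ≤ max (SEP x c 0) (SEP x c 1) := by
      have h0 := le_max_left (SEP x c 0) (SEP x c 1)
      have h1 := le_max_right (SEP x c 0) (SEP x c 1)
      have := SEP_add x c
      linarith
    have : nEP x c - (nEP x c ^ 2 - nEP x c) / 2 ≤ nEP x c / 2 := by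
      rw [hn]; nlinarith
    linarith

lemma BEP_ge {T C : ℕ} (x : XEP T C) : (T : ℝ) - PEP x / 2 ≤ BEP x := by
  have h1 : ∑ c : Fin C, (nEP x c - (nEP x c ^ 2 - nEP x c) / 2) ≤ BEP x := by
    rw [BEP]
    exact Finset.sum_le_sum fun c _ => max_SEP_ge x c
  have h2 : ∑ c : Fin C, (nEP x c - (nEP x c ^ 2 - nEP x c) / 2)
      = (T : ℝ) - PEP x / 2 := by
    rw [Finset.sum_sub_distrib, sum_nEP, ← Finset.sum_div, sum_qEP]
  linarith

lemma SEP_nonneg {T C : ℕ} (x : XEP T C) (c : Fin C) (j : Fin 2) : 0 ≤ SEP x c j := by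
  refine Finset.sum_nonneg fun t _ => ?_
  by_cases h : x.1 t = c <;> simp [h, rfEP_nonneg]

lemma SEP_le_n {T C : ℕ} (x : XEP T C) (c : Fin C) (j : Fin 2) : SEP x c j ≤ nEP x c := by
  refine Finset.sum_le_sum fun t _ => ?_
  by_cases h : x.1 t = c <;> simp [h, rfEP_le_one]

lemma BEP_nonneg {T C : ℕ} (x : XEP T C) : 0 ≤ BEP x :=
  Finset.sum_nonneg fun c _ => le_trans (SEP_nonneg x c 0) (le_max_left _ _)

lemma BEP_le {T C : ℕ} (x : XEP T C) : BEP x ≤ T := by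
  have h : BEP x ≤ ∑ c : Fin C, nEP x c :=
    Finset.sum_le_sum fun c _ => max_le (SEP_le_n x c 0) (SEP_le_n x c 1)
  rw [sum_nEP] at h
  exact h

lemma bench_eq {T C : ℕ} (x : XEP T C) (πP : Fin C → Fin 2)
    (hπ : ∀ (c : Fin C) (j : Fin 2), SEP x c j ≤ SEP x c (πP c)) :
    ∑ t : Fin T, rfEP (πP (x.1 t)) (x.2 t (x.1 t)) = BEP x := by
  have h1 : ∀ t : Fin T, rfEP (πP (x.1 t)) (x.2 t (x.1 t))
      = ∑ c : Fin C, if x.1 t = c then rfEP (πP c) (x.2 t c) else 0 := by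
    intro t
    rw [Finset.sum_ite_eq]
    simp
  rw [Finset.sum_congr rfl fun t _ => h1 t, Finset.sum_comm, BEP]
  refine Finset.sum_congr rfl fun c _ => ?_
  have hS : (∑ t : Fin T, if x.1 t = c then rfEP (πP c) (x.2 t c) else 0) = SEP x c (πP c) := rfl
  rw [hS]
  have h01 : πP c = 0 ∨ πP c = 1 := by
    have : ∀ j : Fin 2, j = 0 ∨ j = 1 := by decide
    exact this _
  refine le_antisymm ?_ (max_le (hπ c 0) (hπ c 1))
  rcases h01 with h | h <;> rw [h]
  · exact le_max_left _ _
  · exact le_max_right _ _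

noncomputable def flipEP {T C : ℕ} (t : Fin T) (x : XEP T C) : XEP T C :=
  (x.1, fun u c => if u = t ∧ c = x.1 t then !(x.2 u c) else x.2 u c)

lemma flipEP_invol {T C : ℕ} (t : Fin T) : Function.Involutive (flipEP (C := C) t) := by
  rintro ⟨f, g⟩
  unfold flipEP
  simp only [Prod.mk.injEq]
  refine ⟨trivial, ?_⟩
  funext u c
  by_cases h : u = t ∧ c = f t <;> simp [h]

lemma integral_PEP {T C : ℕ} (hC : 1 ≤ C) :
    ∫ x, PEP x ∂μEP T C ≤ (T : ℝ) ^ 2 / C := by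
  haveI := μEP_isProb (T := T) hC
  have hrw : ∫ x, PEP x ∂μEP T C
      = ∑ t : Fin T, ∑ u : Fin T,
          ∫ x, (if u ≠ t ∧ x.1 u = x.1 t then (1 : ℝ) else 0) ∂μEP T C := by
    simp only [PEP]
    rw [integral_finset_sum _ fun t _ => Integrable.of_finite]
    exact Finset.sum_congr rfl fun t _ =>
      integral_finset_sum _ fun u _ => Integrable.of_finite
  have hterm : ∀ t u : Fin T,
      ∫ x, (if u ≠ t ∧ x.1 u = x.1 t then (1 : ℝ) else 0) ∂μEP T C ≤ 1 / C := by
    intro t u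
    by_cases h : u = t
    · simp only [h, ne_eq, not_true_eq_false, false_and, if_false, integral_zero]
      positivity
    · have heq : (fun x : XEP T C => (if u ≠ t ∧ x.1 u = x.1 t then (1 : ℝ) else 0))
          = fun x => (if x.1 u = x.1 t then (1 : ℝ) else 0) := by
        funext x; by_cases h2 : x.1 u = x.1 t <;> simp [h, h2]
      rw [heq, integral_ind hC h]
  have hsum : (∑ t : Fin T, ∑ u : Fin T,
        ∫ x, (if u ≠ t ∧ x.1 u = x.1 t then (1 : ℝ) else 0) ∂μEP T C)
      ≤ ∑ _t : Fin T, ∑ _u : Fin T, (1 : ℝ) / C :=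
    Finset.sum_le_sum fun t _ => Finset.sum_le_sum fun u _ => hterm t u
  rw [hrw]
  refine le_trans hsum ?_
  rw [Finset.sum_const, Finset.sum_const, Finset.card_univ, Fintype.card_fin,
    nsmul_eq_mul, nsmul_eq_mul]
  ring_nf
  exact le_of_eq (by ring)

lemma integral_BEP {T C : ℕ} (hC : 1 ≤ C) :
    (T : ℝ) - (T : ℝ) ^ 2 / (2 * C) ≤ ∫ x, BEP x ∂μEP T C := by
  haveI := μEP_isProb (T := T) hC
  have h1 : ∫ x, ((T : ℝ) - PEP x / 2) ∂μEP T C ≤ ∫ x, BEP x ∂μEP T C :=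
    integral_mono Integrable.of_finite Integrable.of_finite fun x => BEP_ge x
  have h2 : ∫ x, ((T : ℝ) - PEP x / 2) ∂μEP T C
      = (T : ℝ) - (∫ x, PEP x ∂μEP T C) / 2 := by
    rw [integral_sub (integrable_const _) Integrable.of_finite, integral_const,
      integral_div]
    simp
  have h3 := integral_PEP (T := T) (C := C) hC
  have h4 : (T : ℝ) ^ 2 / (2 * C) = ((T : ℝ) ^ 2 / C) / 2 := by ring
  linarith

lemma E_alg {T C : ℕ} (hC : 1 ≤ C) {S : Type} (s : S)
    (I : S → XEP T C → Fin T → Fin 2)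
    (hA : ∀ s' (x x' : XEP T C) (t : Fin T),
      (∀ u : Fin T, u ≤ t → x.1 u = x'.1 u) →
      (∀ u : Fin T, u < t → ∀ c : Fin C,
        rfEP (I s' x u) (x.2 u c) = rfEP (I s' x u) (x'.2 u c)) →
      I s' x t = I s' x' t)
    (t : Fin T) :
    ∫ x, rfEP (I s x t) (x.2 t (x.1 t)) ∂μEP T C = 1 / 2 := by
  refine integral_invol hC (flipEP t) (flipEP_invol t) _ fun x => ?_
  have hIflip : I s x t = I s (flipEP t x) t := by
    refine hA s x (flipEP t x) t (fun u _ => rfl) fun u hu c => ?_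
    have hne : u ≠ t := ne_of_lt hu
    have : (flipEP t x).2 u c = x.2 u c := by
      show (if u = t ∧ c = x.1 t then !(x.2 u c) else x.2 u c) = x.2 u c
      rw [if_neg (by tauto)]
    rw [this]
  have hcoin : (flipEP t x).2 t ((flipEP t x).1 t) = !(x.2 t (x.1 t)) := by
    show (if t = t ∧ x.1 t = x.1 t then !(x.2 t (x.1 t)) else x.2 t (x.1 t))
      = !(x.2 t (x.1 t))
    rw [if_pos ⟨rfl, rfl⟩]
  rw [hcoin, ← hIflip, rfEP_not]
  ring

/-- no algorithm can have small ex-post regret in contextual bandits with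
cross-learning.  For every `ε ∈ (0,1/2)` and `T ≥ 1` there is a number of contexts `C`
such that, for the instance in which the contexts are i.i.d. uniform on `Fin C` and,
independently for every pair (round, context), the reward vector of the two arms is
`(1,0)` or `(0,1)` with probability `1/2` each, every randomized algorithm `A` has
`E[Reg_Post(A)] ≥ (1/2 − ε)·T`, the benchmark being the best stationary policy in
hindsight. -/
theorem expost_regret_lower_bound (ε : ℝ) (hε0 : 0 < ε) (hε : ε < 1/2) (T : ℕ) (hT : 1 ≤ T) :
    ∃ C : ℕ, 1 ≤ C ∧
      -- the instance: contexts i.i.d. uniform on Fin C, and an independent fair coin for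
      -- every (round, context) pair determining which arm has reward 1
      (let μ : Measure ((Fin T → Fin C) × (Fin T → Fin C → Bool)) :=
        (Measure.pi fun _ : Fin T => ((C : ENNReal)⁻¹ • Measure.count : Measure (Fin C))).prod
          (Measure.pi fun _ : Fin T =>
            Measure.pi fun _ : Fin C => ((2 : ENNReal)⁻¹ • Measure.count : Measure Bool))
      IsProbabilityMeasure μ ∧
      ∀ (S : Type) (_ : MeasurableSpace S) (ν : Measure S), IsProbabilityMeasure ν →
      ∀ (I : S → ((Fin T → Fin C) × (Fin T → Fin C → Bool)) → Fin T → Fin 2)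
        (πP : ((Fin T → Fin C) × (Fin T → Fin C → Bool)) → Fin C → Fin 2),
        -- measurability of the algorithm
        (∀ t : Fin T,
          Measurable (fun q : S × ((Fin T → Fin C) × (Fin T → Fin C → Bool)) =>
            I q.1 q.2 t)) →
        -- adaptedness: the action at round t depends only on the contexts observed up to
        -- round t and the reward vectors revealed by cross-learning in earlier rounds
        (∀ s x x' (t : Fin T),
          (∀ u : Fin T, u ≤ t → x.1 u = x'.1 u) →
          (∀ u : Fin T, u < t → ∀ c : Fin C,
            rfEP (I s x u) (x.2 u c) = rfEP (I s x u) (x'.2 u c)) →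
          I s x t = I s x' t) →
        -- πP is the best stationary policy in hindsight
        (∀ x (c : Fin C) (j : Fin 2),
          ∑ t : Fin T, (if x.1 t = c then rfEP j (x.2 t c) else 0)
            ≤ ∑ t : Fin T, (if x.1 t = c then rfEP (πP x c) (x.2 t c) else 0)) →
        (1/2 - ε) * T ≤
          ∫ q, ((∑ t : Fin T, rfEP (πP q.2 (q.2.1 t)) (q.2.2 t (q.2.1 t)))
              - ∑ t : Fin T, rfEP (I q.1 q.2 t) (q.2.2 t (q.2.1 t))) ∂(ν.prod μ)) := by
  classical
  set C : ℕ := ⌈(T : ℝ) / (2 * ε)⌉₊ with hCdef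
  have hTpos : (0 : ℝ) < T := by exact_mod_cast hT
  have hquot : (0 : ℝ) < (T : ℝ) / (2 * ε) := div_pos hTpos (by linarith)
  have hC : 1 ≤ C := Nat.ceil_pos.mpr hquot
  have hCge : (T : ℝ) / (2 * ε) ≤ (C : ℝ) := Nat.le_ceil _
  have hCpos : (0 : ℝ) < C := lt_of_lt_of_le hquot hCge
  have harr : (T : ℝ) ^ 2 / (2 * C) ≤ ε * T := by
    rw [div_le_iff₀ (by linarith)]
    have hT2 : (T : ℝ) ≤ 2 * ε * C := by
      rw [div_le_iff₀ (by linarith)] at hCge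
      linarith
    nlinarith
  haveI hμ : IsProbabilityMeasure (μEP T C) := μEP_isProb hC
  have hmain : ∀ (S : Type) (_ : MeasurableSpace S) (ν : Measure S), IsProbabilityMeasure ν →
      ∀ (I : S → XEP T C → Fin T → Fin 2)
        (πP : XEP T C → Fin C → Fin 2),
        (∀ t : Fin T, Measurable (fun q : S × XEP T C => I q.1 q.2 t)) →
        (∀ s x x' (t : Fin T),
          (∀ u : Fin T, u ≤ t → x.1 u = x'.1 u) →
          (∀ u : Fin T, u < t → ∀ c : Fin C,
            rfEP (I s x u) (x.2 u c) = rfEP (I s x u) (x'.2 u c)) →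
          I s x t = I s x' t) →
        (∀ x (c : Fin C) (j : Fin 2),
          ∑ t : Fin T, (if x.1 t = c then rfEP j (x.2 t c) else 0)
            ≤ ∑ t : Fin T, (if x.1 t = c then rfEP (πP x c) (x.2 t c) else 0)) →
        (1/2 - ε) * T ≤
          ∫ q, ((∑ t : Fin T, rfEP (πP q.2 (q.2.1 t)) (q.2.2 t (q.2.1 t)))
              - ∑ t : Fin T, rfEP (I q.1 q.2 t) (q.2.2 t (q.2.1 t)))
            ∂(ν.prod (μEP T C)) := by
    intro S mS ν hν I πP hI hA hπ
    haveI := hν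
    have hg_eq : (fun q : S × XEP T C =>
        ((∑ t : Fin T, rfEP (πP q.2 (q.2.1 t)) (q.2.2 t (q.2.1 t)))
          - ∑ t : Fin T, rfEP (I q.1 q.2 t) (q.2.2 t (q.2.1 t))))
        = fun q : S × XEP T C =>
            BEP q.2 - ∑ t : Fin T, rfEP (I q.1 q.2 t) (q.2.2 t (q.2.1 t)) := by
      funext q
      rw [bench_eq q.2 (πP q.2) (fun c j => hπ q.2 c j)]
    rw [hg_eq]
    have hmeas : Measurable (fun q : S × XEP T C =>
        BEP q.2 - ∑ t : Fin T, rfEP (I q.1 q.2 t) (q.2.2 t (q.2.1 t))) := by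
      have h1 : Measurable fun q : S × XEP T C => BEP q.2 :=
        (measurable_of_countable (BEP : XEP T C → ℝ)).comp measurable_snd
      have h2 : ∀ t : Fin T,
          Measurable fun q : S × XEP T C => rfEP (I q.1 q.2 t) (q.2.2 t (q.2.1 t)) := by
        intro t
        have heq : (fun q : S × XEP T C => rfEP (I q.1 q.2 t) (q.2.2 t (q.2.1 t)))
            = (fun p : Fin 2 × XEP T C => rfEP p.1 (p.2.2 t (p.2.1 t)))
              ∘ (fun q : S × XEP T C => (I q.1 q.2 t, q.2)) := rfl
        rw [heq]
        exact (measurable_of_countable _).comp ((hI t).prodMk measurable_snd)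
      exact h1.sub (Finset.measurable_sum _ fun t _ => h2 t)
    have hbound : ∀ q : S × XEP T C,
        ‖BEP q.2 - ∑ t : Fin T, rfEP (I q.1 q.2 t) (q.2.2 t (q.2.1 t))‖ ≤ 2 * T := by
      intro q
      have hF0 : (0 : ℝ) ≤ ∑ t : Fin T, rfEP (I q.1 q.2 t) (q.2.2 t (q.2.1 t)) :=
        Finset.sum_nonneg fun t _ => rfEP_nonneg _ _
      have hF1 : (∑ t : Fin T, rfEP (I q.1 q.2 t) (q.2.2 t (q.2.1 t))) ≤ T := by
        calc (∑ t : Fin T, rfEP (I q.1 q.2 t) (q.2.2 t (q.2.1 t)))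
            ≤ ∑ _t : Fin T, (1 : ℝ) := Finset.sum_le_sum fun t _ => rfEP_le_one _ _
          _ = T := by simp
      have hB0 := BEP_nonneg q.2
      have hB1 := BEP_le q.2
      rw [Real.norm_eq_abs, abs_le]
      constructor <;> linarith
    have hint : Integrable (fun q : S × XEP T C =>
        BEP q.2 - ∑ t : Fin T, rfEP (I q.1 q.2 t) (q.2.2 t (q.2.1 t)))
        (ν.prod (μEP T C)) := by
      refine Integrable.mono' (integrable_const (2 * (T : ℝ)))
        hmeas.aestronglyMeasurable (ae_of_all _ hbound)
    rw [integral_prod _ hint]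
    have hinner : ∀ s : S, (1/2 - ε) * T ≤
        ∫ x, (BEP x - ∑ t : Fin T, rfEP (I s x t) (x.2 t (x.1 t))) ∂μEP T C := by
      intro s
      rw [integral_sub Integrable.of_finite Integrable.of_finite,
        integral_finset_sum _ fun t _ => Integrable.of_finite,
        Finset.sum_congr rfl fun t (_ : t ∈ Finset.univ) => E_alg hC s I hA t,
        Finset.sum_const, Finset.card_univ, Fintype.card_fin, nsmul_eq_mul]
      have hB := integral_BEP (T := T) (C := C) hC
      linarith
    have hconst : (1/2 - ε) * (T : ℝ) = ∫ _s, ((1/2 - ε) * (T : ℝ)) ∂ν := by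
      rw [integral_const]
      simp [measure_univ]
    rw [hconst]
    exact integral_mono (integrable_const _) hint.integral_prod_left fun s => hinner s
  exact ⟨C, hC, hμ, hmain⟩
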